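/- Let I_≫ denote the category whose objects are surjective order-preserving maps I ↠ P of finite linearly ordered sets, and whose morphisms (I↠P) → (J↠Q) are pairs (θ: I → J, ρ: Q → P) with θ surjective making the square commute, and let J_≫ be the analogous category where the partitioning maps I → P are allowed to be arbitrary order-preserving maps. Then the full inclusion I_≫ ↪ J_≫ admits a left adjoint, sending an object s: I → P to the corestriction s: I ↠ s(I) onto its image. -/

import Mathlib

open CategoryTheory

/-- An object of `𝒥 = Tw(Ord)ᵒᵖ`: a partitioned finite linearly ordered set,
i.e. an order-preserving map `s : I → P` of finite linear orders. -/
structure JObj : Type 1 where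
  I : Type
  [linI : LinearOrder I]
  [finI : Fintype I]
  P : Type
  [linP : LinearOrder P]
  [finP : Fintype P]
  s : I →o P

attribute [instance] JObj.linI JObj.finI JObj.linP JObj.finP

/-- A morphism in `𝒥` from `(I → P)` to `(J → Q)`: order-preserving maps
`θ : I → J` and `ρ : Q → P` making the evident square commute. -/
@[ext]
structure JHom (A B : JObj) where
  θ : A.I →o B.I
  ρ : B.P →o A.P
  comm : ∀ i, ρ (B.s (θ i)) = A.s i

def JHom.comp' {A B C : JObj} (f : JHom A B) (g : JHom B C) : JHom A C :=
  ⟨g.θ.comp f.θ, f.ρ.comp g.ρ, fun i => by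
    show f.ρ (g.ρ (C.s (g.θ (f.θ i)))) = A.s i
    rw [g.comm, f.comm]⟩

instance : Category JObj where
  Hom := JHom
  id A := ⟨OrderHom.id, OrderHom.id, fun _ => rfl⟩
  comp := JHom.comp'

/-- The category `𝒥_≫`: same objects as `𝒥`, but morphisms `(θ, ρ)` with `θ` surjective. -/
def Jgg : Type 1 := JObj

def Jgg.obj (A : Jgg) : JObj := A

instance : Category Jgg where
  Hom A B := {f : JHom A.obj B.obj // Function.Surjective f.θ}
  id A := ⟨⟨OrderHom.id, OrderHom.id, fun _ => rfl⟩, fun i => ⟨i, rfl⟩⟩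
  comp f g := ⟨f.1.comp' g.1, g.2.comp f.2⟩

/-- The inclusion `𝒥_≫ ↪ 𝒥`. -/
def inclJgg : Jgg ⥤ JObj where
  obj A := A.obj
  map f := f.1


/-- The category `ℐ_≫`: the full subcategory of `𝒥_≫` on surjective partitioning maps. -/
def Igg := CategoryTheory.ObjectProperty.FullSubcategory (fun A : Jgg => Function.Surjective A.obj.s)

instance : Category Igg := CategoryTheory.ObjectProperty.FullSubcategory.category _

/-- The object of `𝒥` obtained by corestricting `s : I → P` onto its image. -/
def imgJ (A : JObj) : JObj where
  I := A.I
  P := ↥(Set.range A.s)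
  s := ⟨fun i => ⟨A.s i, ⟨i, rfl⟩⟩, fun a b h => Subtype.mk_le_mk.mpr (A.s.monotone h)⟩

theorem imgJ_surj (A : JObj) : Function.Surjective (imgJ A).s :=
  fun p => ⟨p.2.choose, Subtype.ext p.2.choose_spec⟩

def Lfun : Jgg ⥤ Igg where
  obj A := ⟨(imgJ A.obj : Jgg), imgJ_surj A.obj⟩
  map {A B} f := ⟨⟨f.1.θ,
    ⟨fun p => ⟨f.1.ρ p.1, by
        obtain ⟨j, hj⟩ := p.2
        obtain ⟨i, hi⟩ := f.2 j
        exact ⟨i, by rw [← f.1.comm i, hi, hj]⟩⟩,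
      fun a b h => Subtype.mk_le_mk.mpr (f.1.ρ.monotone h)⟩,
    fun i => Subtype.ext (f.1.comm i)⟩, f.2⟩
  map_id A := rfl
  map_comp f g := rfl

def theAdj : Lfun ⊣ ObjectProperty.ι (fun A : Jgg => Function.Surjective A.obj.s) :=
  Adjunction.mkOfHomEquiv
  { homEquiv := fun A B =>
      { toFun := fun f => ⟨⟨f.hom.1.θ,
          ⟨fun p => (f.hom.1.ρ p).1, fun a b h => f.hom.1.ρ.monotone h⟩,
          fun i => congrArg Subtype.val (f.hom.1.comm i)⟩, f.hom.2⟩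
        invFun := fun g => ⟨⟨g.1.θ,
          ⟨fun p => ⟨g.1.ρ p, by
              obtain ⟨j, hj⟩ := B.2 p
              obtain ⟨i, hi⟩ := g.2 j
              exact ⟨i, by rw [← g.1.comm i, hi]; exact congrArg _ hj⟩⟩,
            fun a b h => Subtype.mk_le_mk.mpr (g.1.ρ.monotone h)⟩,
          fun i => Subtype.ext (g.1.comm i)⟩, g.2⟩
        left_inv := fun f => rfl
        right_inv := fun g => rfl }
    homEquiv_naturality_left_symm := fun f g => rfl
    homEquiv_naturality_right := fun f g => rfl }

/-- the full inclusion `ℐ_≫ ↪ 𝒥_≫` admits a left adjoint, sending an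
object `s : I → P` to its corestriction `s : I ↠ s(I)` onto its image. -/
theorem stmt_4 :
    ∃ L : Jgg ⥤ Igg,
      Nonempty (L ⊣ ObjectProperty.ι (fun A : Jgg => Function.Surjective A.obj.s)) ∧
      ∀ A : Jgg, Nonempty (L.obj A ≅ ⟨(imgJ A.obj : Jgg), imgJ_surj A.obj⟩) := by
  exact ⟨Lfun, ⟨theAdj⟩, fun A => ⟨Iso.refl _⟩⟩
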